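/- Let X be a perfectly normal space (every closed set is a Gδ and open sets are countable unions of closed sets, equivalently countable unions of zero sets) in which every nowhere dense set is countable. Then every quasicontinuous function f : X → ℝ is of the first Baire class, i.e., f is the pointwise limit of a sequence of continuous real-valued functions on X. -/

import Mathlib

open Set Filter Topology

section Fsig
variable {X : Type*} [TopologicalSpace X]

/-- An Fσ set: countable union of closed sets. -/
def IsFsig (A : Set X) : Prop := ∃ c : ℕ → Set X, (∀ n, IsClosed (c n)) ∧ A = ⋃ n, c n

lemma isFsig_empty : IsFsig (∅ : Set X) :=
  ⟨fun _ => ∅, fun _ => isClosed_empty, by simp⟩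

lemma isFsig_of_countable [T1Space X] {S : Set X} (hS : S.Countable) : IsFsig S := by
  rcases S.eq_empty_or_nonempty with rfl | hne
  · exact isFsig_empty
  · obtain ⟨g, rfl⟩ := hS.exists_eq_range hne
    exact ⟨fun n => {g n}, fun _ => isClosed_singleton, (iUnion_singleton_eq_range g).symm⟩

lemma isFsig_of_isOpen [PerfectlyNormalSpace X] {U : Set X} (hU : IsOpen U) : IsFsig U := by
  obtain ⟨g, hgo, hg⟩ :=
    (PerfectlyNormalSpace.closed_gdelta (isClosed_compl_iff.mpr hU)).eq_iInter_nat
  refine ⟨fun n => (g n)ᶜ, fun n => (hgo n).isClosed_compl, ?_⟩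
  rw [← compl_compl U, hg, compl_iInter]

lemma IsFsig.union {A B : Set X} (hA : IsFsig A) (hB : IsFsig B) : IsFsig (A ∪ B) := by
  obtain ⟨c, hc, rfl⟩ := hA; obtain ⟨d, hd, rfl⟩ := hB
  exact ⟨fun n => c n ∪ d n, fun n => (hc n).union (hd n), (iUnion_union_distrib c d).symm⟩

lemma IsFsig.inter_closed {A B : Set X} (hA : IsFsig A) (hB : IsClosed B) : IsFsig (A ∩ B) := by
  obtain ⟨c, hc, rfl⟩ := hA
  exact ⟨fun n => c n ∩ B, fun n => (hc n).inter hB, by rw [iUnion_inter]⟩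

/-- A set whose indicator is approximable: both it and its complement Fσ. -/
lemma baire_one_indicator [NormalSpace X] {H : Set X} (h1 : IsFsig H) (h2 : IsFsig Hᶜ) :
    ∃ φ : ℕ → X → ℝ, (∀ n, Continuous (φ n)) ∧ (∀ n x, φ n x ∈ Icc (0:ℝ) 1) ∧
      ∀ x, Tendsto (fun n => φ n x) atTop (nhds (H.indicator 1 x)) := by
  obtain ⟨c, hc, hcU⟩ := h1
  obtain ⟨d, hd, hdU⟩ := h2
  have hCc : ∀ n, IsClosed (⋃ i ∈ Finset.range (n+1), c i) :=
    fun n => isClosed_biUnion_finset (fun i _ => hc i)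
  have hDc : ∀ n, IsClosed (⋃ i ∈ Finset.range (n+1), d i) :=
    fun n => isClosed_biUnion_finset (fun i _ => hd i)
  have hCH : ∀ n, (⋃ i ∈ Finset.range (n+1), c i) ⊆ H := by
    intro n y hy
    simp only [mem_iUnion] at hy
    obtain ⟨i, _, hi⟩ := hy
    rw [hcU]; exact mem_iUnion.2 ⟨i, hi⟩
  have hDH : ∀ n, (⋃ i ∈ Finset.range (n+1), d i) ⊆ Hᶜ := by
    intro n y hy
    simp only [mem_iUnion] at hy
    obtain ⟨i, _, hi⟩ := hy
    rw [hdU]; exact mem_iUnion.2 ⟨i, hi⟩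
  have hdisj : ∀ n, Disjoint (⋃ i ∈ Finset.range (n+1), d i) (⋃ i ∈ Finset.range (n+1), c i) := by
    intro n
    exact (disjoint_compl_left.mono (hDH n) (hCH n))
  have hury : ∀ n : ℕ, ∃ φ : X → ℝ, Continuous φ ∧
      (∀ y ∈ ⋃ i ∈ Finset.range (n+1), d i, φ y = 0) ∧
      (∀ y ∈ ⋃ i ∈ Finset.range (n+1), c i, φ y = 1) ∧ (∀ y, φ y ∈ Icc (0:ℝ) 1) := by
    intro n
    obtain ⟨φ, h0, h1, hm⟩ := exists_continuous_zero_one_of_isClosed (hDc n) (hCc n) (hdisj n)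
    exact ⟨φ, φ.continuous, fun y hy => h0 hy, fun y hy => h1 hy, hm⟩
  choose φ hφc hφ0 hφ1 hφm using hury
  refine ⟨φ, hφc, fun n x => hφm n x, ?_⟩
  intro x
  by_cases hx : x ∈ H
  · have : ∃ N, x ∈ c N := by rw [hcU] at hx; exact mem_iUnion.1 hx
    obtain ⟨N, hN⟩ := this
    have hev : ∀ᶠ n in atTop, φ n x = 1 := by
      filter_upwards [eventually_ge_atTop N] with n hn
      exact hφ1 n x (mem_biUnion (Finset.mem_range.2 (Nat.lt_succ_of_le hn)) hN)
    rw [indicator_of_mem hx, Pi.one_apply]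
    refine Tendsto.congr' ?_ tendsto_const_nhds
    filter_upwards [hev] with n h
    exact h.symm
  · have : ∃ N, x ∈ d N := by
      have hx' : x ∈ Hᶜ := hx
      rw [hdU] at hx'
      exact mem_iUnion.1 hx'
    obtain ⟨N, hN⟩ := this
    have hev : ∀ᶠ n in atTop, φ n x = 0 := by
      filter_upwards [eventually_ge_atTop N] with n hn
      exact hφ0 n x (mem_biUnion (Finset.mem_range.2 (Nat.lt_succ_of_le hn)) hN)
    rw [indicator_of_notMem hx]
    refine Tendsto.congr' ?_ tendsto_const_nhds
    filter_upwards [hev] with n h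
    exact h.symm

lemma count_lb : ∀ (n : ℕ) (s : ℝ), s ≤ n →
    s - 1 ≤ ∑ k ∈ Finset.range n, (if (k:ℝ) + 1 ≤ s then (1:ℝ) else 0) := by
  intro n
  induction n with
  | zero => intro s hs; simp only [Nat.cast_zero] at hs; simp; linarith
  | succ m ih =>
    intro s hs
    rw [Finset.sum_range_succ]
    by_cases h : s ≤ m
    · have := ih s h
      have : (0:ℝ) ≤ if (m:ℝ) + 1 ≤ s then (1:ℝ) else 0 := by positivity
      linarith [ih s h]
    · push_neg at h
      have hall : ∀ k ∈ Finset.range m, (if (k:ℝ) + 1 ≤ s then (1:ℝ) else 0) = 1 := by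
        intro k hk
        rw [if_pos]
        have : (k:ℝ) + 1 ≤ m := by
          have := Finset.mem_range.1 hk
          exact_mod_cast this
        linarith
      rw [Finset.sum_congr rfl hall, Finset.sum_const, Finset.card_range]
      have : (0:ℝ) ≤ if (m:ℝ) + 1 ≤ s then (1:ℝ) else 0 := by positivity
      push_cast [Nat.cast_succ] at hs ⊢
      simp only [nsmul_eq_mul, mul_one]
      linarith

lemma count_ub : ∀ (n : ℕ) (s : ℝ), 0 ≤ s →
    (∑ k ∈ Finset.range n, (if (k:ℝ) < s then (1:ℝ) else 0)) ≤ s + 1 := by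
  intro n
  induction n with
  | zero => intro s hs; simp; linarith
  | succ m ih =>
    intro s hs
    rw [Finset.sum_range_succ]
    by_cases h : (m:ℝ) < s
    · have hb : (∑ k ∈ Finset.range m, (if (k:ℝ) < s then (1:ℝ) else 0)) ≤ m := by
        calc (∑ k ∈ Finset.range m, (if (k:ℝ) < s then (1:ℝ) else 0))
            ≤ ∑ k ∈ Finset.range m, (1:ℝ) := by
              apply Finset.sum_le_sum; intro k _; split_ifs <;> norm_num
          _ = m := by simp
      rw [if_pos h]
      linarith
    · rw [if_neg h]
      simpa using ih s hs

lemma geom_tail (a b : ℕ) : (∑ i ∈ Finset.Ico (a+1) b, ((1:ℝ)/2) ^ i) ≤ (1/2)^a := by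
  by_cases hab : a + 1 ≤ b
  · rw [Finset.sum_Ico_eq_sum_range]
    have : ∀ i ∈ Finset.range (b - (a+1)), ((1:ℝ)/2) ^ (a + 1 + i) = (1/2)^(a+1) * (1/2)^i := by
      intro i _; rw [pow_add]
    rw [Finset.sum_congr rfl this, ← Finset.mul_sum]
    have h2 := sum_geometric_two_le (b - (a+1))
    have hp : (0:ℝ) < (1/2)^(a+1) := by positivity
    calc ((1:ℝ)/2)^(a+1) * ∑ i ∈ Finset.range (b-(a+1)), ((1:ℝ)/2)^i
        ≤ (1/2)^(a+1) * 2 := by nlinarith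
      _ = (1/2)^a := by rw [pow_succ]; ring
  · rw [Finset.Ico_eq_empty (by omega)]
    simp only [Finset.sum_empty]
    positivity

lemma frontier_open_nowhereDense {X : Type*} [TopologicalSpace X] {V : Set X} (hV : IsOpen V) :
    IsNowhereDense (closure V \ V) := by
  have hcl : IsClosed (closure V \ V) := isClosed_closure.sdiff hV
  rw [hcl.isNowhereDense_iff]
  by_contra h
  obtain ⟨x, hx⟩ := nonempty_iff_ne_empty.2 h
  have hxc : x ∈ closure V := (interior_subset hx).1
  have hW : interior (closure V \ V) ∈ nhds x := isOpen_interior.mem_nhds hx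
  obtain ⟨y, hy1, hy2⟩ := mem_closure_iff_nhds.1 hxc _ hW
  exact (interior_subset hy1).2 hy2

end Fsig

theorem quasicontinuous_baireOne {X : Type*} [TopologicalSpace X] [T1Space X]
    [PerfectlyNormalSpace X]
    (hX : ∀ N : Set X, IsNowhereDense N → N.Countable)
    (f : X → ℝ)
    (hf : ∀ O : Set ℝ, IsOpen O → f ⁻¹' O ⊆ closure (interior (f ⁻¹' O))) :
    ∃ g : ℕ → X → ℝ, (∀ n, Continuous (g n)) ∧
      ∀ x, Filter.Tendsto (fun n => g n x) Filter.atTop (nhds (f x)) := by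
  have hπ : (0:ℝ) < Real.pi := Real.pi_pos
  set σ : ℝ → ℝ := fun t => Real.arctan t / Real.pi + 1/2 with hσdef
  have hσc : Continuous σ := (Real.continuous_arctan.div_const _).add continuous_const
  set F : X → ℝ := fun x => σ (f x) with hFdef
  have hFmem : ∀ x, F x ∈ Ioo (0:ℝ) 1 := by
    intro x
    have h1 := Real.arctan_lt_pi_div_two (f x)
    have h2 := Real.neg_pi_div_two_lt_arctan (f x)
    have h3 : Real.arctan (f x) / Real.pi < 1/2 := by
      rw [div_lt_iff₀ hπ]; linarith
    have h4 : -(1/2 : ℝ) < Real.arctan (f x) / Real.pi := by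
      rw [lt_div_iff₀ hπ]; linarith
    constructor
    · show (0:ℝ) < Real.arctan (f x) / Real.pi + 1/2; linarith
    · show Real.arctan (f x) / Real.pi + 1/2 < 1; linarith
  -- structure of preimages of open sets
  have hstr : ∀ U : Set ℝ, IsOpen U → ∃ V S : Set X, IsOpen V ∧ S.Countable ∧
      F ⁻¹' U = V ∪ S := by
    intro U hU
    have hO : IsOpen (σ ⁻¹' U) := hU.preimage hσc
    have hq := hf _ hO
    refine ⟨interior (f ⁻¹' (σ ⁻¹' U)),
      (f ⁻¹' (σ ⁻¹' U)) ∩ (closure (interior (f ⁻¹' (σ ⁻¹' U))) \ interior (f ⁻¹' (σ ⁻¹' U))),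
      isOpen_interior, ?_, ?_⟩
    · exact (hX _ (frontier_open_nowhereDense isOpen_interior)).mono inter_subset_right
    · ext x
      constructor
      · intro hx
        have hx' : x ∈ f ⁻¹' (σ ⁻¹' U) := hx
        by_cases hv : x ∈ interior (f ⁻¹' (σ ⁻¹' U))
        · exact Or.inl hv
        · exact Or.inr ⟨hx', hq hx', hv⟩
      · rintro (hx | hx)
        · exact interior_subset hx
        · exact hx.1
  -- between lemma
  have hbtw : ∀ a b : ℝ, a < b → ∃ H : Set X, IsFsig H ∧ IsFsig Hᶜ ∧
      F ⁻¹' (Ici b) ⊆ H ∧ H ⊆ F ⁻¹' (Ioi a) := by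
    intro a b hab
    obtain ⟨V, S, hV, hS, hBeq⟩ := hstr (Ioi a) isOpen_Ioi
    obtain ⟨V', S', hV', hS', hAeq⟩ := hstr (Iio b) isOpen_Iio
    set H : Set X := V ∪ ((S ∪ S') ∩ (F ⁻¹' (Ioi a)) ∩ V'ᶜ) with hHdef
    have hHB : H ⊆ F ⁻¹' (Ioi a) := by
      rintro x (hx | hx)
      · rw [hBeq]; exact Or.inl hx
      · exact hx.1.2
    have hAH : F ⁻¹' (Ici b) ⊆ H := by
      intro x hx
      have hxa : x ∈ F ⁻¹' (Ioi a) := lt_of_lt_of_le hab hx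
      have hxV' : x ∉ V' := by
        intro hv'
        have hlt : x ∈ F ⁻¹' (Iio b) := by rw [hAeq]; exact Or.inl hv'
        simp only [mem_preimage, mem_Ici] at hx
        simp only [mem_preimage, mem_Iio] at hlt
        linarith
      have : x ∈ V ∪ S := by rw [← hBeq]; exact hxa
      rcases this with h | h
      · exact Or.inl h
      · exact Or.inr ⟨⟨Or.inl h, hxa⟩, hxV'⟩
    have hcompl : Hᶜ = (V' ∩ Vᶜ) ∪ ((S ∪ S') ∩ Hᶜ) := by
      ext x
      constructor
      · intro hx
        have hxV : x ∉ V := fun hv => hx (Or.inl hv)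
        by_cases hv' : x ∈ V'
        · exact Or.inl ⟨hv', hxV⟩
        · refine Or.inr ⟨?_, hx⟩
          rcases lt_or_ge a (F x) with h2 | h2
          · have : x ∈ V ∪ S := by rw [← hBeq]; exact h2
            rcases this with h3 | h3
            · exact absurd h3 hxV
            · exact Or.inl h3
          · have : x ∈ V' ∪ S' := by
              rw [← hAeq]; exact lt_of_le_of_lt h2 hab
            rcases this with h3 | h3
            · exact absurd h3 hv'
            · exact Or.inr h3
      · rintro (⟨hv', hv⟩ | ⟨_, hx⟩)
        · rintro (h | h)
          · exact hv h
          · exact h.2 hv'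
        · exact hx
    refine ⟨H, ?_, ?_, hAH, hHB⟩
    · exact (isFsig_of_isOpen hV).union
        (isFsig_of_countable (((hS.union hS').mono (fun x hx => hx.1.1))))
    · rw [hcompl]
      exact ((isFsig_of_isOpen hV').inter_closed hV.isClosed_compl).union
        (isFsig_of_countable (((hS.union hS').mono (fun x hx => hx.1))))
  -- uniform approximations at scale 1/(m+1)
  have happrox : ∀ m : ℕ, ∃ (h : X → ℝ) (ψ : ℕ → X → ℝ),
      (∀ j, Continuous (ψ j)) ∧ (∀ j x, ψ j x ∈ Icc (0:ℝ) 1) ∧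
      (∀ x, Tendsto (fun j => ψ j x) atTop (nhds (h x))) ∧
      (∀ x, |h x - F x| ≤ 1/((m:ℝ)+1)) := by
    intro m
    have hm1 : (0:ℝ) < (m:ℝ) + 1 := by positivity
    have hstep : ∀ k : ℕ, ∃ (H : Set X) (φ : ℕ → X → ℝ),
        (F ⁻¹' (Ici (((k:ℝ)+1)/((m:ℝ)+1))) ⊆ H) ∧ (H ⊆ F ⁻¹' (Ioi ((k:ℝ)/((m:ℝ)+1)))) ∧
        (∀ j, Continuous (φ j)) ∧ (∀ j x, φ j x ∈ Icc (0:ℝ) 1) ∧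
        (∀ x, Tendsto (fun j => φ j x) atTop (nhds (H.indicator 1 x))) := by
      intro k
      have hab : (k:ℝ)/((m:ℝ)+1) < ((k:ℝ)+1)/((m:ℝ)+1) := by
        apply div_lt_div_of_pos_right (by linarith) hm1
      obtain ⟨H, h1, h2, h3, h4⟩ := hbtw _ _ hab
      obtain ⟨φ, hc, hm', ht⟩ := baire_one_indicator h1 h2
      exact ⟨H, φ, h3, h4, hc, hm', ht⟩
    choose Hs φ hH1 hH2 hφc hφm hφt using hstep
    refine ⟨fun x => (∑ k ∈ Finset.range (m+1), (Hs k).indicator 1 x)/((m:ℝ)+1),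
            fun j x => (∑ k ∈ Finset.range (m+1), φ k j x)/((m:ℝ)+1), ?_, ?_, ?_, ?_⟩
    · intro j
      exact (continuous_finset_sum _ (fun k _ => hφc k j)).div_const _
    · intro j x
      constructor
      · apply div_nonneg _ hm1.le
        exact Finset.sum_nonneg fun k _ => (hφm k j x).1
      · rw [div_le_one hm1]
        calc (∑ k ∈ Finset.range (m+1), φ k j x) ≤ ∑ k ∈ Finset.range (m+1), (1:ℝ) :=
              Finset.sum_le_sum fun k _ => (hφm k j x).2
          _ = (m:ℝ) + 1 := by simp
    · intro x
      exact (tendsto_finset_sum _ (fun k _ => hφt k x)).div_const _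
    · intro x
      set c := F x with hc
      have hc0 : 0 < c := (hFmem x).1
      have hc1 : c < 1 := (hFmem x).2
      have hlow : ∑ k ∈ Finset.range (m+1), (if (k:ℝ) + 1 ≤ ((m:ℝ)+1)*c then (1:ℝ) else 0)
          ≤ ∑ k ∈ Finset.range (m+1), (Hs k).indicator 1 x := by
        apply Finset.sum_le_sum
        intro k _
        split_ifs with hk
        · have hx : x ∈ Hs k := by
            apply hH1 k
            simp only [mem_preimage, mem_Ici]
            rw [div_le_iff₀ hm1]
            linarith
          rw [indicator_of_mem hx, Pi.one_apply]
        · exact indicator_nonneg (fun _ _ => by norm_num) x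
      have hup : ∑ k ∈ Finset.range (m+1), (Hs k).indicator 1 x
          ≤ ∑ k ∈ Finset.range (m+1), (if (k:ℝ) < ((m:ℝ)+1)*c then (1:ℝ) else 0) := by
        apply Finset.sum_le_sum
        intro k _
        by_cases hx : x ∈ Hs k
        · have := hH2 k hx
          simp only [mem_preimage, mem_Ioi] at this
          rw [div_lt_iff₀ hm1] at this
          rw [if_pos (by linarith), indicator_of_mem hx, Pi.one_apply]
        · rw [indicator_of_notMem hx]
          split_ifs <;> norm_num
      have hlb := count_lb (m+1) (((m:ℝ)+1)*c) (by push_cast; nlinarith)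
      have hub := count_ub (m+1) (((m:ℝ)+1)*c) (by positivity)
      push_cast at hlb hub
      have e1 : ((m:ℝ)+1)*c - 1 ≤ ∑ k ∈ Finset.range (m+1), (Hs k).indicator 1 x := by
        linarith
      have e2 : ∑ k ∈ Finset.range (m+1), (Hs k).indicator 1 x ≤ ((m:ℝ)+1)*c + 1 := by
        linarith
      have heq : (∑ k ∈ Finset.range (m+1), (Hs k).indicator 1 x)/((m:ℝ)+1) - c
          = ((∑ k ∈ Finset.range (m+1), (Hs k).indicator 1 x) - ((m:ℝ)+1)*c)/((m:ℝ)+1) := by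
        field_simp
      rw [heq, abs_div, abs_of_pos hm1]
      rw [div_le_div_iff_of_pos_right hm1]
      rw [abs_le]
      constructor <;> linarith
  choose h ψ hψc hψm hψt hhF using happrox
  set e : ℕ → X → ℝ := fun i => h (2^i - 1) with hedef
  have hpow : ∀ i : ℕ, ((2^i - 1 : ℕ):ℝ) + 1 = 2^i := by
    intro i
    have h1 : (1:ℕ) ≤ 2^i := Nat.one_le_two_pow
    push_cast [h1]
    ring
  have heF : ∀ i x, |e i x - F x| ≤ (1/2:ℝ)^i := by
    intro i x
    have h2 := hhF (2^i - 1) x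
    rw [hpow i] at h2
    calc |e i x - F x| ≤ 1/((2:ℝ)^i) := h2
      _ = (1/2:ℝ)^i := by rw [div_pow, one_pow]
  set u : ℕ → X → ℝ := fun i x => e i x - (if i = 0 then 0 else e (i-1) x) with hudef
  have htel : ∀ (n : ℕ) (x : X), ∑ i ∈ Finset.range (n+1), u i x = e n x := by
    intro n x
    rw [Finset.sum_range_succ']
    have hcg : ∀ i ∈ Finset.range n, u (i+1) x = e (i+1) x - e i x := by
      intro i _; simp [hudef]
    rw [Finset.sum_congr rfl hcg, Finset.sum_range_sub (fun i => e i x)]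
    simp [hudef]
  have hFb : ∀ x, |F x| ≤ 1 := by
    intro x
    have h1 := (hFmem x).1
    have h2 := (hFmem x).2
    rw [abs_le]; constructor <;> linarith
  have hu : ∀ i x, |u i x| ≤ 3 * (1/2:ℝ)^i := by
    intro i x
    cases i with
    | zero =>
      have h1 := heF 0 x
      have h2 := hFb x
      have h4 : u 0 x = e 0 x := by simp [hudef]
      rw [h4]
      calc |e 0 x| = |(e 0 x - F x) + F x| := by ring_nf
        _ ≤ |e 0 x - F x| + |F x| := abs_add_le _ _
        _ ≤ 3 * 1 := by simp only [pow_zero] at h1; linarith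
    | succ j =>
      have h1 := heF (j+1) x
      have h2 := heF j x
      have h3 : (1/2:ℝ)^j = 2 * (1/2:ℝ)^(j+1) := by rw [pow_succ]; ring
      have h4 : u (j+1) x = e (j+1) x - e j x := by simp [hudef]
      rw [h4]
      calc |e (j+1) x - e j x| ≤ |e (j+1) x - F x| + |F x - e j x| := abs_sub_le _ _ _
        _ = |e (j+1) x - F x| + |e j x - F x| := by rw [abs_sub_comm (F x)]
        _ ≤ 3 * (1/2:ℝ)^(j+1) := by linarith
  set v : ℕ → ℕ → X → ℝ :=
    fun i j x => ψ (2^i - 1) j x - (if i = 0 then 0 else ψ (2^(i-1) - 1) j x) with hvdef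
  have hvc : ∀ i j, Continuous (fun x => v i j x) := by
    intro i j
    cases i with
    | zero =>
      have h4 : ∀ y, v 0 j y = ψ (2^0 - 1) j y := by intro y; simp [hvdef]
      simp only [h4]
      exact hψc _ j
    | succ k =>
      simp only [hvdef, Nat.succ_ne_zero, if_neg, Nat.add_sub_cancel]
      exact (hψc _ j).sub (hψc _ j)
  have hvt : ∀ i x, Tendsto (fun j => v i j x) atTop (nhds (u i x)) := by
    intro i x
    cases i with
    | zero =>
      have h4 : ∀ j, v 0 j x = ψ (2^0 - 1) j x := by intro j; simp [hvdef]
      have h5 : u 0 x = e 0 x := by simp [hudef]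
      simp only [h4, h5]
      exact hψt _ x
    | succ k =>
      simp only [hvdef, hudef, Nat.succ_ne_zero, if_neg, Nat.add_sub_cancel]
      exact (hψt _ x).sub (hψt _ x)
  set w : ℕ → ℕ → X → ℝ :=
    fun i j x => max (-(3 * (1/2:ℝ)^i)) (min (3 * (1/2:ℝ)^i) (v i j x)) with hwdef
  have hwc : ∀ i j, Continuous (fun x => w i j x) :=
    fun i j => continuous_const.max (continuous_const.min (hvc i j))
  have hwb : ∀ i j x, |w i j x| ≤ 3 * (1/2:ℝ)^i := by
    intro i j x
    have hcpos : (0:ℝ) ≤ 3 * (1/2:ℝ)^i := by positivity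
    rw [abs_le]
    constructor
    · exact le_max_left _ _
    · exact max_le (by linarith) (min_le_left _ _)
  have hwt : ∀ i x, Tendsto (fun j => w i j x) atTop (nhds (u i x)) := by
    intro i x
    have hcont : Continuous (fun t : ℝ => max (-(3 * (1/2:ℝ)^i)) (min (3 * (1/2:ℝ)^i) t)) :=
      continuous_const.max (continuous_const.min continuous_id)
    have h5 := (hcont.tendsto (u i x)).comp (hvt i x)
    have hb := hu i x
    rw [abs_le] at hb
    have heq : max (-(3 * (1/2:ℝ)^i)) (min (3 * (1/2:ℝ)^i) (u i x)) = u i x := by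
      rw [min_eq_right hb.2, max_eq_right hb.1]
    rw [heq] at h5
    exact h5
  set g : ℕ → X → ℝ := fun n x => ∑ i ∈ Finset.range (n+1), w i n x with hgdef
  have hgc : ∀ n, Continuous (g n) := fun n => continuous_finset_sum _ (fun i _ => hwc i n)
  have hgF : ∀ x, Tendsto (fun n => g n x) atTop (nhds (F x)) := by
    intro x
    rw [Metric.tendsto_atTop]
    intro ε hε
    obtain ⟨K, hK⟩ : ∃ K : ℕ, 7 * (1/2:ℝ)^K < ε/2 := by
      have h2 : Tendsto (fun n : ℕ => 7 * (1/2:ℝ)^n) atTop (nhds 0) := by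
        simpa using
          (tendsto_pow_atTop_nhds_zero_of_lt_one (by norm_num) (by norm_num : (1/2:ℝ) < 1)).const_mul 7
      exact (h2.eventually_lt_const (half_pos hε)).exists
    have hA : Tendsto (fun n => ∑ i ∈ Finset.range (K+1), |w i n x - u i x|) atTop (nhds 0) := by
      have h6 : ∀ i : ℕ, Tendsto (fun n => |w i n x - u i x|) atTop (nhds 0) := by
        intro i
        have h7 := ((hwt i x).sub (tendsto_const_nhds : Tendsto (fun _ : ℕ => u i x) atTop (nhds (u i x)))).abs
        simpa using h7
      have := tendsto_finset_sum (Finset.range (K+1)) (fun i _ => h6 i)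
      simpa using this
    obtain ⟨N₁, hN₁⟩ := (eventually_atTop.1 (hA.eventually_lt_const (half_pos hε)))
    refine ⟨max N₁ K, fun n hn => ?_⟩
    have hnK : K ≤ n := le_trans (le_max_right _ _) hn
    have hnN : N₁ ≤ n := le_trans (le_max_left _ _) hn
    rw [Real.dist_eq]
    have hsplit : ∑ i ∈ Finset.range (n+1), |w i n x - u i x|
        = (∑ i ∈ Finset.range (K+1), |w i n x - u i x|)
          + ∑ i ∈ Finset.Ico (K+1) (n+1), |w i n x - u i x| := by
      have hcons := Finset.sum_Ico_consecutive (fun i => |w i n x - u i x|)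
        (Nat.zero_le (K+1)) (by omega : K+1 ≤ n+1)
      rw [Finset.range_eq_Ico, ← hcons, ← Finset.range_eq_Ico]
    have htail : ∑ i ∈ Finset.Ico (K+1) (n+1), |w i n x - u i x| ≤ 6 * (1/2:ℝ)^K := by
      have hterm : ∀ i ∈ Finset.Ico (K+1) (n+1), |w i n x - u i x| ≤ 6 * (1/2:ℝ)^i := by
        intro i _
        calc |w i n x - u i x| ≤ |w i n x| + |u i x| := abs_sub _ _
          _ ≤ 6 * (1/2:ℝ)^i := by
            have := hwb i n x; have := hu i x; linarith
      calc ∑ i ∈ Finset.Ico (K+1) (n+1), |w i n x - u i x|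
          ≤ ∑ i ∈ Finset.Ico (K+1) (n+1), 6 * (1/2:ℝ)^i := Finset.sum_le_sum hterm
        _ = 6 * ∑ i ∈ Finset.Ico (K+1) (n+1), (1/2:ℝ)^i := by rw [Finset.mul_sum]
        _ ≤ 6 * (1/2:ℝ)^K := by
            have := geom_tail K (n+1); linarith
    have hge : |g n x - e n x| ≤ ∑ i ∈ Finset.range (n+1), |w i n x - u i x| := by
      have h7 : g n x - e n x = ∑ i ∈ Finset.range (n+1), (w i n x - u i x) := by
        rw [Finset.sum_sub_distrib, htel n x]
      rw [h7]
      exact Finset.abs_sum_le_sum_abs _ _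
    have hce : |e n x - F x| ≤ (1/2:ℝ)^K := by
      calc |e n x - F x| ≤ (1/2:ℝ)^n := heF n x
        _ ≤ (1/2:ℝ)^K := pow_le_pow_of_le_one (by norm_num) (by norm_num) hnK
    have hAbound := hN₁ n hnN
    calc |g n x - F x| ≤ |g n x - e n x| + |e n x - F x| := abs_sub_le _ _ _
      _ ≤ (∑ i ∈ Finset.range (n+1), |w i n x - u i x|) + (1/2:ℝ)^K := by linarith
      _ = (∑ i ∈ Finset.range (K+1), |w i n x - u i x|)
          + (∑ i ∈ Finset.Ico (K+1) (n+1), |w i n x - u i x|) + (1/2:ℝ)^K := by rw [hsplit]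
      _ < ε/2 + 6 * (1/2:ℝ)^K + (1/2:ℝ)^K := by linarith
      _ < ε := by linarith
  -- final composition with the inverse homeomorphism
  refine ⟨fun n x => Real.tan (Real.pi *
      (max ((1:ℝ)/((n:ℝ)+3)) (min (1 - 1/((n:ℝ)+3)) (g n x)) - 1/2)), ?_, ?_⟩
  · intro n
    have hccb : (0:ℝ) < 1/((n:ℝ)+3) := by positivity
    have hcc2 : (1:ℝ)/((n:ℝ)+3) ≤ 1/3 := by
      rw [div_le_div_iff₀ (by positivity) (by norm_num)]
      have : (0:ℝ) ≤ (n:ℝ) := Nat.cast_nonneg n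
      linarith
    have hθc : Continuous (fun x => Real.pi *
        (max ((1:ℝ)/((n:ℝ)+3)) (min (1 - 1/((n:ℝ)+3)) (g n x)) - 1/2)) :=
      continuous_const.mul ((continuous_const.max (continuous_const.min (hgc n))).sub
        continuous_const)
    rw [continuous_iff_continuousAt]
    intro x
    have hs1 : (1:ℝ)/((n:ℝ)+3) ≤ max ((1:ℝ)/((n:ℝ)+3)) (min (1 - 1/((n:ℝ)+3)) (g n x)) :=
      le_max_left _ _
    have hs2 : max ((1:ℝ)/((n:ℝ)+3)) (min (1 - 1/((n:ℝ)+3)) (g n x)) ≤ 1 - 1/((n:ℝ)+3) :=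
      max_le (by linarith) (min_le_left _ _)
    have hmem : Real.pi * (max ((1:ℝ)/((n:ℝ)+3)) (min (1 - 1/((n:ℝ)+3)) (g n x)) - 1/2)
        ∈ Ioo (-(Real.pi/2)) (Real.pi/2) := by
      constructor
      · nlinarith
      · nlinarith
    have hcos := Real.cos_pos_of_mem_Ioo hmem
    exact ContinuousAt.comp (g := Real.tan)
      (f := fun x => Real.pi * (max ((1:ℝ)/((n:ℝ)+3)) (min (1 - 1/((n:ℝ)+3)) (g n x)) - 1/2))
      (x := x) (Real.continuousAt_tan.mpr (ne_of_gt hcos)) hθc.continuousAt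
  · intro x
    have harc : Real.pi * (F x - 1/2) = Real.arctan (f x) := by
      show Real.pi * (Real.arctan (f x) / Real.pi + 1/2 - 1/2) = Real.arctan (f x)
      field_simp
      ring
    have hclamp : Tendsto (fun n : ℕ => max ((1:ℝ)/((n:ℝ)+3))
        (min (1 - 1/((n:ℝ)+3)) (g n x))) atTop (nhds (F x)) := by
      obtain ⟨δ, hδ, hδF1, hδF2⟩ : ∃ δ : ℝ, 0 < δ ∧ δ ≤ F x ∧ δ ≤ 1 - F x := by
        refine ⟨min (F x) (1 - F x), ?_, min_le_left _ _, min_le_right _ _⟩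
        have h1 := (hFmem x).1
        have h2 := (hFmem x).2
        exact lt_min h1 (by linarith)
      have hcc0 : Tendsto (fun n : ℕ => (1:ℝ)/((n:ℝ)+3)) atTop (nhds 0) := by
        have h8 : Tendsto (fun n : ℕ => ((n:ℝ)+3)) atTop atTop :=
          tendsto_atTop_add_const_right _ 3 tendsto_natCast_atTop_atTop
        simp only [one_div]; exact h8.inv_tendsto_atTop
      have hev1 : ∀ᶠ n : ℕ in atTop, (1:ℝ)/((n:ℝ)+3) < δ/2 :=
        hcc0.eventually_lt_const (by linarith)
      have hev2 : ∀ᶠ n : ℕ in atTop, |g n x - F x| < δ/2 := by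
        have := (hgF x).eventually (Metric.ball_mem_nhds (F x) (by linarith : (0:ℝ) < δ/2))
        simpa [Real.dist_eq] using this
      refine Tendsto.congr' ?_ (hgF x)
      filter_upwards [hev1, hev2] with n h1 h2
      rw [abs_lt] at h2
      obtain ⟨h2a, h2b⟩ := h2
      clear_value g F
      have t0 : F x - δ/2 < g n x := by linarith only [h2a]
      have t1 : g n x < F x + δ/2 := by linarith only [h2b]
      have hg1 : (1:ℝ)/((n:ℝ)+3) ≤ g n x := by linarith only [h1, t0, hδF1]
      have hg2 : g n x ≤ 1 - 1/((n:ℝ)+3) := by linarith only [h1, t1, hδF2]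
      rw [min_eq_right hg2, max_eq_right hg1]
    have hcos : Real.cos (Real.pi * (F x - 1/2)) ≠ 0 := by
      rw [harc]
      exact ne_of_gt (Real.cos_arctan_pos (f x))
    have htan : ContinuousAt Real.tan (Real.pi * (F x - 1/2)) :=
      Real.continuousAt_tan.mpr hcos
    have hθt : Tendsto (fun n : ℕ => Real.pi * (max ((1:ℝ)/((n:ℝ)+3))
        (min (1 - 1/((n:ℝ)+3)) (g n x)) - 1/2)) atTop (nhds (Real.pi * (F x - 1/2))) :=
      ((hclamp.sub_const _).const_mul _)
    have hfinal := htan.tendsto.comp hθt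
    rw [harc, Real.tan_arctan] at hfinal
    exact hfinal
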